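/- Given A > 0 and Q ∈ ℝ, the minimizer of the functional E(f) = ∫_ℝ [ξ²/2 · f + c² f ln f + gZ f + c² ln(c√(2π)) f ] dξ over nonnegative functions f with ∫f dξ = A and ∫ξ f dξ = Q is the Maxwellian M(ξ) = (A/c) χ((ξ−u)/c) with χ(ω) = (1/√(2π)) exp(−ω²/2) and u = Q/A. -/

import Mathlib

open MeasureTheory Real

private lemma key_ineq {x m : ℝ} (hx : 0 ≤ x) (hm : 0 < m) :
    x - m ≤ x * Real.log x - x * Real.log m := by
  rcases hx.eq_or_lt with h | h
  · simp [← h]; linarith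
  · have h1 := Real.log_le_sub_one_of_pos (div_pos hm h)
    rw [Real.log_div hm.ne' h.ne'] at h1
    have h2 : m / x * x = m := div_mul_cancel₀ m h.ne'
    nlinarith [mul_le_mul_of_nonneg_left h1 h.le]

private lemma odd_gauss (b : ℝ) : ∫ x : ℝ, x * Real.exp (-b * x ^ 2) = 0 := by
  have h := integral_neg_eq_self (fun x : ℝ => x * Real.exp (-b * x ^ 2)) volume
  have h2 : (fun x : ℝ => (-x) * Real.exp (-b * (-x) ^ 2))
      = fun x : ℝ => -(x * Real.exp (-b * x ^ 2)) := by
    funext x; rw [neg_sq]; ring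
  simp only [h2, integral_neg] at h
  linarith

/-- The Gaussian Maxwellian `M(ξ) = (A/c) χ((ξ-u)/c)`, `χ(ω) = (1/√(2π)) e^{-ω²/2}`,
`u = Q/A`, minimizes the kinetic energy functional
`E(f) = ∫ [ξ²/2 f + c² f ln f + gZ f + c² ln(c√(2π)) f] dξ`
among nonnegative functions with `∫ f = A` and `∫ ξ f = Q`. -/
theorem gibbs_minimizes_energy (c g Z : ℝ) (hc : 0 < c) (hg : 0 < g)
    (A Q : ℝ) (hA : 0 < A) :
    let u := Q / A
    let M : ℝ → ℝ := fun ξ => A / c * (1 / Real.sqrt (2 * π) * Real.exp (-((ξ - u) / c) ^ 2 / 2))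
    (∀ ξ, 0 ≤ M ξ) ∧ (∫ ξ, M ξ) = A ∧ (∫ ξ, ξ * M ξ) = Q ∧
    ∀ f : ℝ → ℝ, (∀ ξ, 0 ≤ f ξ) → Integrable f → (∫ ξ, f ξ) = A →
      Integrable (fun ξ => ξ * f ξ) → (∫ ξ, ξ * f ξ) = Q →
      Integrable (fun ξ => ξ ^ 2 / 2 * f ξ + c ^ 2 * f ξ * Real.log (f ξ)
        + g * Z * f ξ + c ^ 2 * Real.log (c * Real.sqrt (2 * π)) * f ξ) →
      (∫ ξ, ξ ^ 2 / 2 * M ξ + c ^ 2 * M ξ * Real.log (M ξ)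
          + g * Z * M ξ + c ^ 2 * Real.log (c * Real.sqrt (2 * π)) * M ξ)
        ≤ ∫ ξ, ξ ^ 2 / 2 * f ξ + c ^ 2 * f ξ * Real.log (f ξ)
          + g * Z * f ξ + c ^ 2 * Real.log (c * Real.sqrt (2 * π)) * f ξ := by
  intro u M
  have hu : u = Q / A := rfl
  have hsπ : (0:ℝ) < Real.sqrt (2 * π) := Real.sqrt_pos.mpr (by positivity)
  have hb : (0:ℝ) < 1 / (2 * c ^ 2) := by positivity
  -- rewrite M as a standard Gaussian
  have hMeq : ∀ ξ, M ξ = A / (c * Real.sqrt (2 * π))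
      * Real.exp (-(1 / (2 * c ^ 2)) * (ξ - u) ^ 2) := by
    intro ξ
    have hexp : Real.exp (-((ξ - u) / c) ^ 2 / 2)
        = Real.exp (-(1 / (2 * c ^ 2)) * (ξ - u) ^ 2) := by
      congr 1
      rw [div_pow]
      field_simp
    simp only [M]
    rw [hexp]
    ring
  have hMpos : ∀ ξ, 0 < M ξ := by
    intro ξ; rw [hMeq ξ]; positivity
  have hIexp : Integrable (fun x : ℝ => Real.exp (-(1 / (2 * c ^ 2)) * x ^ 2)) :=
    integrable_exp_neg_mul_sq hb
  have hIM : Integrable M := by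
    have h := (hIexp.comp_sub_right u).const_mul (A / (c * Real.sqrt (2 * π)))
    exact h.congr (ae_of_all _ fun ξ => (hMeq ξ).symm)
  have hIxexp : Integrable (fun x : ℝ => x * Real.exp (-(1 / (2 * c ^ 2)) * x ^ 2)) :=
    integrable_mul_exp_neg_mul_sq hb
  have hIxM : Integrable (fun ξ => ξ * M ξ) := by
    have h := ((hIxexp.comp_sub_right u).const_mul (A / (c * Real.sqrt (2 * π)))).add
      (hIM.const_mul u)
    refine h.congr (ae_of_all _ fun ξ => ?_)
    simp only [Pi.add_apply]
    rw [hMeq ξ]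
    ring
  have hsqrt : Real.sqrt (π / (1 / (2 * c ^ 2))) = c * Real.sqrt (2 * π) := by
    rw [show π / (1 / (2 * c ^ 2)) = c ^ 2 * (2 * π) by field_simp,
      Real.sqrt_mul (sq_nonneg c), Real.sqrt_sq hc.le]
  have hint : (∫ ξ, M ξ) = A := by
    have h1 : (∫ ξ, M ξ) = A / (c * Real.sqrt (2 * π))
        * ∫ ξ, Real.exp (-(1 / (2 * c ^ 2)) * (ξ - u) ^ 2) := by
      rw [← integral_const_mul]
      exact integral_congr_ae (ae_of_all _ fun ξ => hMeq ξ)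
    rw [h1, integral_sub_right_eq_self (fun x => Real.exp (-(1 / (2 * c ^ 2)) * x ^ 2)) u,
      integral_gaussian, hsqrt]
    field_simp
  have hmom : (∫ ξ, ξ * M ξ) = Q := by
    have h1 : (fun ξ => ξ * M ξ) = fun ξ => A / (c * Real.sqrt (2 * π))
        * ((ξ - u) * Real.exp (-(1 / (2 * c ^ 2)) * (ξ - u) ^ 2)) + u * M ξ := by
      funext ξ; rw [hMeq ξ]; ring
    rw [h1, integral_add ((hIxexp.comp_sub_right u).const_mul _) (hIM.const_mul u),
      integral_const_mul, integral_const_mul,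
      integral_sub_right_eq_self (fun x => x * Real.exp (-(1 / (2 * c ^ 2)) * x ^ 2)) u,
      odd_gauss, hint, hu]
    field_simp
    ring
  refine ⟨fun ξ => (hMpos ξ).le, hint, hmom, ?_⟩
  -- the log of M, scaled by c²
  have hc2logM : ∀ ξ, c ^ 2 * Real.log (M ξ) = c ^ 2 * Real.log A
      - c ^ 2 * Real.log (c * Real.sqrt (2 * π)) - (ξ - u) ^ 2 / 2 := by
    intro ξ
    rw [hMeq ξ, Real.log_mul (by positivity) (Real.exp_ne_zero _), Real.log_exp,
      Real.log_div hA.ne' (by positivity)]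
    field_simp
    ring
  -- the energy of M
  have hGM : ∀ ξ, ξ ^ 2 / 2 * M ξ + c ^ 2 * M ξ * Real.log (M ξ)
      + g * Z * M ξ + c ^ 2 * Real.log (c * Real.sqrt (2 * π)) * M ξ
      = (c ^ 2 * Real.log A + g * Z - u ^ 2 / 2) * M ξ + u * (ξ * M ξ) := by
    intro ξ
    linear_combination M ξ * hc2logM ξ
  have hEM : (∫ ξ, ξ ^ 2 / 2 * M ξ + c ^ 2 * M ξ * Real.log (M ξ)
      + g * Z * M ξ + c ^ 2 * Real.log (c * Real.sqrt (2 * π)) * M ξ)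
      = (c ^ 2 * Real.log A + g * Z - u ^ 2 / 2) * A + u * Q := by
    rw [show (fun ξ => ξ ^ 2 / 2 * M ξ + c ^ 2 * M ξ * Real.log (M ξ)
        + g * Z * M ξ + c ^ 2 * Real.log (c * Real.sqrt (2 * π)) * M ξ)
        = fun ξ => (c ^ 2 * Real.log A + g * Z - u ^ 2 / 2) * M ξ + u * (ξ * M ξ)
        from funext hGM]
    rw [integral_add (hIM.const_mul _) (hIxM.const_mul u),
      integral_const_mul (c ^ 2 * Real.log A + g * Z - u ^ 2 / 2) M,
      integral_const_mul u (fun a => a * M a), hint, hmom]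
  intro f hf hIf hintf hIxf hmomf hIG
  -- pointwise Gibbs inequality
  have hpt : ∀ ξ, (c ^ 2 * Real.log A + g * Z - u ^ 2 / 2) * f ξ + u * (ξ * f ξ)
      + c ^ 2 * f ξ - c ^ 2 * M ξ
      ≤ ξ ^ 2 / 2 * f ξ + c ^ 2 * f ξ * Real.log (f ξ)
        + g * Z * f ξ + c ^ 2 * Real.log (c * Real.sqrt (2 * π)) * f ξ := by
    intro ξ
    have hk := mul_le_mul_of_nonneg_left (key_ineq (hf ξ) (hMpos ξ)) (sq_nonneg c)
    have e1 : c ^ 2 * (f ξ * Real.log (M ξ)) = f ξ * (c ^ 2 * Real.log A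
        - c ^ 2 * Real.log (c * Real.sqrt (2 * π)) - (ξ - u) ^ 2 / 2) := by
      linear_combination f ξ * hc2logM ξ
    nlinarith [hk, e1]
  have hIlhs : Integrable (fun ξ => (c ^ 2 * Real.log A + g * Z - u ^ 2 / 2) * f ξ
      + u * (ξ * f ξ) + c ^ 2 * f ξ - c ^ 2 * M ξ) :=
    (((hIf.const_mul _).add (hIxf.const_mul u)).add (hIf.const_mul _)).sub (hIM.const_mul _)
  have hmono := integral_mono hIlhs hIG hpt
  have hval : (∫ ξ, (c ^ 2 * Real.log A + g * Z - u ^ 2 / 2) * f ξ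
      + u * (ξ * f ξ) + c ^ 2 * f ξ - c ^ 2 * M ξ)
      = (c ^ 2 * Real.log A + g * Z - u ^ 2 / 2) * A + u * Q := by
    have h3 : Integrable (fun ξ => (c ^ 2 * Real.log A + g * Z - u ^ 2 / 2) * f ξ
        + u * (ξ * f ξ) + c ^ 2 * f ξ) :=
      ((hIf.const_mul _).add (hIxf.const_mul u)).add (hIf.const_mul _)
    have h4 : Integrable (fun ξ => (c ^ 2 * Real.log A + g * Z - u ^ 2 / 2) * f ξ
        + u * (ξ * f ξ)) := (hIf.const_mul _).add (hIxf.const_mul u)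
    rw [integral_sub h3 (hIM.const_mul _),
      integral_add h4 (hIf.const_mul _),
      integral_add (hIf.const_mul _) (hIxf.const_mul u),
      integral_const_mul, integral_const_mul, integral_const_mul, integral_const_mul,
      hintf, hmomf, hint]
    ring
  rw [hEM]
  rw [hval] at hmono
  exact hmono
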